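/- arXiv:2104.00625 — 4 statements merged into one kernel-verified Lean document; each statement's English description precedes it below -/
import Mathlib

section
/- Let D be an n×n real symmetric positive definite matrix, M an n×n real matrix, β ∈ ℝⁿ, ε > 0, α ∈ ℝ, and λ > 0. If the (n+1+n)×(n+1+n) block matrix with block rows [λ•D, 0, Mᵀ*D], [0, (α²−λ)ε² (a 1×1 block), βᵀ*D (as a row)], [D*M, D*β (as a column), D] is positive semidefinite, then for every x ∈ ℝⁿ with xᵀ D x ≤ ε² one has (M x + β)ᵀ D (M x + β) ≤ α² ε². -/
open Matrix

/-- **Contraction LMI.** If the 3×3 block matrix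
`[[λ•D, 0, Mᵀ*D], [0, (α²−λ)ε², βᵀ*D], [D*M, D*β, D]]`
(with `D` symmetric positive definite, `ε > 0`, `λ > 0`) is positive
semidefinite, then the affine map `x ↦ M x + β` sends the ellipsoid
`{x : xᵀ D x ≤ ε²}` into the ellipsoid `{x : xᵀ D x ≤ α² ε²}`. -/
theorem contraction_lmi {n : ℕ}
    (D M : Matrix (Fin n) (Fin n) ℝ) (β : Fin n → ℝ)
    (ε α lam : ℝ) (hD : D.PosDef) (hε : 0 < ε) (hlam : 0 < lam)
    (hLMI : (Matrix.fromBlocks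
        (Matrix.fromBlocks (lam • D) 0 0
          (((α ^ 2 - lam) * ε ^ 2) • (1 : Matrix (Fin 1) (Fin 1) ℝ)))
        (Matrix.fromRows (Mᵀ * D) (Matrix.replicateRow (Fin 1) (β ᵥ* D)))
        (Matrix.fromCols (D * M) (Matrix.replicateCol (Fin 1) (D *ᵥ β)))
        D).PosSemidef) :
    ∀ x : Fin n → ℝ, x ⬝ᵥ D *ᵥ x ≤ ε ^ 2 →
      (M *ᵥ x + β) ⬝ᵥ D *ᵥ (M *ᵥ x + β) ≤ α ^ 2 * ε ^ 2 := by
  intro x hx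
  set w := M *ᵥ x + β with hw
  have h := hLMI.dotProduct_mulVec_nonneg (Sum.elim (Sum.elim x (fun _ => (1:ℝ))) (-w))
  simp only [RCLike.re_to_real, star_trivial,
    fromBlocks_mulVec, Sum.elim_comp_inl, Sum.elim_comp_inr,
    fromCols_mulVec_sumElim, fromRows_mulVec,
    sumElim_dotProduct_sumElim, dotProduct_add, add_dotProduct,
    Matrix.mulVec_add, Matrix.mulVec_neg, Matrix.smul_mulVec,
    Matrix.zero_mulVec, Matrix.one_mulVec, Matrix.mulVec_mulVec,
    dotProduct_neg, neg_dotProduct, dotProduct_zero, dotProduct_smul,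
    smul_dotProduct, smul_eq_mul] at h
  have hsym : Dᵀ = D := hD.1
  have e0 : ((fun _ : Fin 1 => (1:ℝ)) ⬝ᵥ fun _ => 1) = 1 := by
    simp [dotProduct]
  have e1 : x ⬝ᵥ (Mᵀ * D) *ᵥ w = (M *ᵥ x) ⬝ᵥ (D *ᵥ w) := by
    rw [← Matrix.mulVec_mulVec, Matrix.dotProduct_mulVec x Mᵀ,
      Matrix.vecMul_transpose]
  have e2 : ((fun _ : Fin 1 => (1:ℝ)) ⬝ᵥ Matrix.replicateRow (Fin 1) (β ᵥ* D) *ᵥ w)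
      = β ⬝ᵥ (D *ᵥ w) := by
    rw [Matrix.replicateRow_mulVec_eq_const, ← Matrix.dotProduct_mulVec]
    simp [dotProduct]
  have e3 : w ⬝ᵥ (D * M) *ᵥ x = (M *ᵥ x) ⬝ᵥ (D *ᵥ w) := by
    rw [← Matrix.mulVec_mulVec, Matrix.dotProduct_mulVec w D,
      ← Matrix.mulVec_transpose, hsym, dotProduct_comm]
  have e5 : Matrix.replicateCol (Fin 1) (D *ᵥ β) *ᵥ (fun _ : Fin 1 => (1:ℝ)) = D *ᵥ β := by
    ext i
    simp [Matrix.mulVec, dotProduct, Matrix.replicateCol_apply]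
  have e4 : w ⬝ᵥ Matrix.replicateCol (Fin 1) (D *ᵥ β) *ᵥ (fun _ : Fin 1 => (1:ℝ))
      = β ⬝ᵥ (D *ᵥ w) := by
    rw [e5, Matrix.dotProduct_mulVec w D, ← Matrix.mulVec_transpose, hsym,
      dotProduct_comm]
  rw [e0, e1, e2, e3, e4] at h
  have key : (M *ᵥ x) ⬝ᵥ (D *ᵥ w) + β ⬝ᵥ (D *ᵥ w) = w ⬝ᵥ D *ᵥ w := by
    rw [hw, add_dotProduct]
  nlinarith [h, hx, hlam, key]
end

section
/- Let δ ∈ [0,1] and γ ∈ ℝ satisfy (gaussianReal 0 1) (Set.Iic (−|γ|/2)) ≥ ENNReal.ofReal ((1 − δ)/2). Then there exists a probability measure W on ℝ × ℝ whose first marginal is gaussianReal 0 1 and whose second marginal is gaussianReal γ 1, such that W {p : ℝ × ℝ | p.1 = p.2} ≥ ENNReal.ofReal (1 − δ). -/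
open MeasureTheory ProbabilityTheory
open scoped ENNReal NNReal

private lemma gaussianReal_map_neg' (m : ℝ) :
    (gaussianReal m 1).map (fun x : ℝ => -x) = gaussianReal (-m) 1 := by
  have h := gaussianReal_map_const_mul (μ := m) (v := 1) (-1)
  have hv1 : (⟨(-1:ℝ)^2, sq_nonneg _⟩ * 1 : NNReal) = 1 := by
    exact Subtype.ext (show ((-1:ℝ)^2 * 1) = (1:ℝ) by norm_num)
  convert h using 2
  · funext x; ring
  · ring
  · exact hv1.symm

private lemma gaussian_shift_coupling_aux (δ γ : ℝ) (hδ1 : δ ≤ 1) (hγ0 : 0 ≤ γ)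
    (hγ : (gaussianReal 0 1) (Set.Iic (-γ / 2)) ≥ ENNReal.ofReal ((1 - δ) / 2)) :
    ∃ W : Measure (ℝ × ℝ), IsProbabilityMeasure W ∧
      W.map Prod.fst = gaussianReal 0 1 ∧
      W.map Prod.snd = gaussianReal γ 1 ∧
      W {p : ℝ × ℝ | p.1 = p.2} ≥ ENNReal.ofReal (1 - δ) := by
  classical
  set f : ℝ → ℝ≥0∞ := gaussianPDF 0 1 with hf
  set g : ℝ → ℝ≥0∞ := gaussianPDF γ 1 with hg
  have hfm : Measurable f := measurable_gaussianPDF 0 1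
  have hgm : Measurable g := measurable_gaussianPDF γ 1
  set A : Set ℝ := Set.Iic (γ / 2) with hA
  have hAm : MeasurableSet A := measurableSet_Iic
  have hBm : MeasurableSet Aᶜ := hAm.compl
  have keyA : ∀ x ∈ A, g x ≤ f x := by
    intro x hx
    simp only [hf, hg, gaussianPDF, Set.mem_Iic, hA] at *
    apply ENNReal.ofReal_le_ofReal
    simp only [gaussianPDFReal]
    apply mul_le_mul_of_nonneg_left _ (by positivity)
    apply Real.exp_le_exp.mpr
    have : (x - 0)^2 ≤ (x - γ)^2 := by nlinarith
    have h2 : (0:ℝ) < 2 * (1:NNReal) := by norm_num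
    apply div_le_div_of_nonneg_right ?_ h2.le |>.trans_eq rfl
    linarith
  have keyB : ∀ x ∈ Aᶜ, f x ≤ g x := by
    intro x hx
    simp only [hf, hg, gaussianPDF, Set.mem_compl_iff, Set.mem_Iic, not_le, hA] at *
    apply ENNReal.ofReal_le_ofReal
    simp only [gaussianPDFReal]
    apply mul_le_mul_of_nonneg_left _ (by positivity)
    apply Real.exp_le_exp.mpr
    have : (x - γ)^2 ≤ (x - 0)^2 := by nlinarith
    have h2 : (0:ℝ) < 2 * (1:NNReal) := by norm_num
    apply div_le_div_of_nonneg_right ?_ h2.le |>.trans_eq rfl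
    linarith
  set ν : Measure ℝ :=
    volume.withDensity (A.indicator g) + volume.withDensity (Aᶜ.indicator f) with hν
  set ρ₀ : Measure ℝ := volume.withDensity (A.indicator (fun x => f x - g x)) with hρ0
  set ργ : Measure ℝ := volume.withDensity (Aᶜ.indicator (fun x => g x - f x)) with hργ
  have h0 : ν + ρ₀ = gaussianReal 0 1 := by
    rw [gaussianReal_of_var_ne_zero 0 one_ne_zero, hν, hρ0,
      ← withDensity_add_right _ (hfm.indicator hBm),
      ← withDensity_add_right _ ((show Measurable (fun x => f x - g x) from hfm.sub hgm).indicator hAm)]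
    congr 1
    funext x
    by_cases hx : x ∈ A
    · have hx' : x ∉ Aᶜ := by simpa using hx
      simp only [Pi.add_apply, Set.indicator_of_mem hx, Set.indicator_of_notMem hx']
      rw [add_zero, add_tsub_cancel_of_le (keyA x hx)]
    · have hx' : x ∈ Aᶜ := by simpa using hx
      simp [Set.indicator_of_mem hx', Set.indicator_of_notMem hx, hf]
  have hγdec : ν + ργ = gaussianReal γ 1 := by
    rw [gaussianReal_of_var_ne_zero γ one_ne_zero, hν, hργ,
      ← withDensity_add_right _ (hfm.indicator hBm),
      ← withDensity_add_right _ ((show Measurable (fun x => g x - f x) from hgm.sub hfm).indicator hBm)]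
    congr 1
    funext x
    by_cases hx : x ∈ A
    · have hx' : x ∉ Aᶜ := by simpa using hx
      simp [Set.indicator_of_mem hx, Set.indicator_of_notMem hx', hg]
    · have hx' : x ∈ Aᶜ := by simpa using hx
      simp only [Pi.add_apply, Set.indicator_of_mem hx', Set.indicator_of_notMem hx]
      rw [zero_add, add_tsub_cancel_of_le (keyB x hx')]
  have h0u : ν Set.univ + ρ₀ Set.univ = 1 := by
    have := congrArg (fun m : Measure ℝ => m Set.univ) h0
    simpa [Measure.add_apply] using this
  have hγu : ν Set.univ + ργ Set.univ = 1 := by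
    have := congrArg (fun m : Measure ℝ => m Set.univ) hγdec
    simpa [Measure.add_apply] using this
  have hνtop : ν Set.univ ≠ ⊤ := by
    intro h
    rw [h] at h0u
    simp at h0u
  have hε : ργ Set.univ = ρ₀ Set.univ :=
    (ENNReal.add_right_inj hνtop).mp (hγu.trans h0u.symm)
  have hεtop : ρ₀ Set.univ ≠ ⊤ := by
    intro h
    rw [h] at h0u
    simp at h0u
  set W : Measure (ℝ × ℝ) :=
    ν.map (fun x => (x, x)) + (ρ₀ Set.univ)⁻¹ • (ρ₀.prod ργ) with hW
  have hdiagm : Measurable (fun x : ℝ => (x, x)) := measurable_id.prodMk measurable_id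
  have hsmul0 : (ρ₀ Set.univ)⁻¹ • ((ργ Set.univ) • ρ₀) = ρ₀ := by
    rw [hε, smul_smul]
    by_cases h : ρ₀ Set.univ = 0
    · have : ρ₀ = 0 := Measure.measure_univ_eq_zero.mp h
      simp [this]
    · rw [ENNReal.inv_mul_cancel h hεtop, one_smul]
  have hsmulγ : (ρ₀ Set.univ)⁻¹ • ((ρ₀ Set.univ) • ργ) = ργ := by
    rw [smul_smul]
    by_cases h : ρ₀ Set.univ = 0
    · have : ργ = 0 := Measure.measure_univ_eq_zero.mp (hε.trans h)
      simp [this]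
    · rw [ENNReal.inv_mul_cancel h hεtop, one_smul]
  have hcomp_fst : Prod.fst ∘ (fun x : ℝ => (x, x)) = id := rfl
  have hcomp_snd : Prod.snd ∘ (fun x : ℝ => (x, x)) = id := rfl
  have hfst : W.map Prod.fst = gaussianReal 0 1 := by
    rw [hW, Measure.map_add _ _ measurable_fst, Measure.map_smul,
      Measure.map_fst_prod, Measure.map_map measurable_fst hdiagm, hcomp_fst,
      Measure.map_id, hsmul0, h0]
  have hsnd : W.map Prod.snd = gaussianReal γ 1 := by
    rw [hW, Measure.map_add _ _ measurable_snd, Measure.map_smul,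
      Measure.map_snd_prod, Measure.map_map measurable_snd hdiagm, hcomp_snd,
      Measure.map_id, hsmulγ, hγdec]
  have hprob : IsProbabilityMeasure W := by
    constructor
    have : W Set.univ = (W.map Prod.fst) Set.univ := by
      rw [Measure.map_apply measurable_fst MeasurableSet.univ, Set.preimage_univ]
    rw [this, hfst]
    exact measure_univ
  have hdiagset : MeasurableSet {p : ℝ × ℝ | p.1 = p.2} :=
    measurableSet_eq_fun measurable_fst measurable_snd
  have hWdiag : ν Set.univ ≤ W {p : ℝ × ℝ | p.1 = p.2} := by
    have hle : (ν.map fun x => (x, x)) {p : ℝ × ℝ | p.1 = p.2} = ν Set.univ := by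
      rw [Measure.map_apply hdiagm hdiagset]
      congr 1
      ext x
      simp
    calc ν Set.univ = (ν.map fun x => (x, x)) {p : ℝ × ℝ | p.1 = p.2} := hle.symm
      _ ≤ W {p : ℝ × ℝ | p.1 = p.2} := by
          rw [hW, Measure.add_apply]
          exact le_self_add
  have hν_univ : ν Set.univ = gaussianReal γ 1 A + gaussianReal 0 1 Aᶜ := by
    rw [hν, Measure.add_apply, withDensity_apply _ MeasurableSet.univ,
      withDensity_apply _ MeasurableSet.univ, Measure.restrict_univ,
      lintegral_indicator hAm, lintegral_indicator hBm,
      gaussianReal_apply γ one_ne_zero, gaussianReal_apply 0 one_ne_zero]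
  have h1 : gaussianReal γ 1 A = gaussianReal 0 1 (Set.Iic (-γ / 2)) := by
    have hmap : gaussianReal γ 1 = (gaussianReal 0 1).map (· + γ) := by
      rw [gaussianReal_map_add_const γ, zero_add]
    rw [hmap, Measure.map_apply (measurable_add_const γ) hAm]
    congr 1
    ext x
    simp only [Set.mem_preimage, Set.mem_Iic, hA]
    constructor <;> intro <;> linarith
  have h2 : gaussianReal 0 1 Aᶜ = gaussianReal 0 1 (Set.Iic (-γ / 2)) := by
    have hmapn : (gaussianReal 0 1).map (fun x : ℝ => -x) = gaussianReal 0 1 := by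
      rw [gaussianReal_map_neg' 0, neg_zero]
    conv_lhs => rw [← hmapn]
    rw [Measure.map_apply measurable_neg hBm]
    have hpre : (fun x : ℝ => -x) ⁻¹' Aᶜ = Set.Iio (-γ / 2) := by
      ext x
      simp only [Set.mem_preimage, Set.mem_compl_iff, Set.mem_Iic, Set.mem_Iio, not_le, hA]
      constructor <;> intro <;> linarith
    rw [hpre]
    have hsing : gaussianReal 0 1 {(-γ / 2 : ℝ)} = 0 :=
      gaussianReal_absolutelyContinuous 0 one_ne_zero (measure_singleton _)
    rw [← Set.Iio_union_right]
    refine le_antisymm (measure_mono Set.subset_union_left) ?_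
    calc (gaussianReal 0 1) (Set.Iio (-γ / 2) ∪ {-γ / 2})
        ≤ (gaussianReal 0 1) (Set.Iio (-γ / 2)) + (gaussianReal 0 1) {-γ / 2} :=
          measure_union_le _ _
      _ = (gaussianReal 0 1) (Set.Iio (-γ / 2)) := by rw [hsing, add_zero]
  refine ⟨W, hprob, hfst, hsnd, le_trans ?_ hWdiag⟩
  rw [hν_univ, h1, h2]
  have hhalf : (0:ℝ) ≤ (1 - δ) / 2 := by linarith
  have : ENNReal.ofReal (1 - δ) =
      ENNReal.ofReal ((1 - δ) / 2) + ENNReal.ofReal ((1 - δ) / 2) := by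
    rw [← ENNReal.ofReal_add hhalf hhalf]
    congr 1
    ring
  rw [this]
  exact add_le_add hγ hγ

/-- **Coupling with deviation `δ`.** If the shift `γ` satisfies
`Φ(−|γ|/2) ≥ (1−δ)/2` with `δ ∈ [0,1]`, then there is a coupling `W` of
`N(0,1)` and `N(γ,1)` whose diagonal event has probability at least `1−δ`. -/
theorem gaussian_shift_coupling_delta (δ γ : ℝ)
    (hδ0 : 0 ≤ δ) (hδ1 : δ ≤ 1)
    (hγ : (gaussianReal 0 1) (Set.Iic (-|γ| / 2)) ≥
      ENNReal.ofReal ((1 - δ) / 2)) :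
    ∃ W : Measure (ℝ × ℝ), IsProbabilityMeasure W ∧
      W.map Prod.fst = gaussianReal 0 1 ∧
      W.map Prod.snd = gaussianReal γ 1 ∧
      W {p : ℝ × ℝ | p.1 = p.2} ≥ ENNReal.ofReal (1 - δ) := by
  rcases le_or_gt 0 γ with h | h
  · exact gaussian_shift_coupling_aux δ γ hδ1 h (by rwa [abs_of_nonneg h] at hγ)
  · obtain ⟨W, hp, h2, h3, h4⟩ :=
      gaussian_shift_coupling_aux δ (-γ) hδ1 (by linarith) (by rwa [abs_of_neg h] at hγ)
    have hm : Measurable fun p : ℝ × ℝ => (-p.1, -p.2) :=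
      (measurable_fst.neg).prodMk (measurable_snd.neg)
    have hdiagset : MeasurableSet {p : ℝ × ℝ | p.1 = p.2} :=
      measurableSet_eq_fun measurable_fst measurable_snd
    refine ⟨W.map (fun p : ℝ × ℝ => (-p.1, -p.2)), ?_, ?_, ?_, ?_⟩
    · exact Measure.isProbabilityMeasure_map hm.aemeasurable
    · rw [Measure.map_map measurable_fst hm]
      have hc : (Prod.fst ∘ fun p : ℝ × ℝ => (-p.1, -p.2)) =
          (fun x : ℝ => -x) ∘ Prod.fst := rfl
      rw [hc, ← Measure.map_map measurable_neg measurable_fst, h2,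
        gaussianReal_map_neg' 0, neg_zero]
    · rw [Measure.map_map measurable_snd hm]
      have hc : (Prod.snd ∘ fun p : ℝ × ℝ => (-p.1, -p.2)) =
          (fun x : ℝ => -x) ∘ Prod.snd := rfl
      rw [hc, ← Measure.map_map measurable_neg measurable_snd, h3,
        gaussianReal_map_neg' (-γ), neg_neg]
    · rw [Measure.map_apply hm hdiagset]
      have hpre : (fun p : ℝ × ℝ => (-p.1, -p.2)) ⁻¹' {p : ℝ × ℝ | p.1 = p.2} =
          {p : ℝ × ℝ | p.1 = p.2} := by
        ext p
        simp [neg_inj]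
      rw [hpre]
      exact h4
end

section
/- For every γ ≥ 0, every probability measure W on ℝ × ℝ whose first marginal is gaussianReal 0 1 and whose second marginal is gaussianReal γ 1 satisfies W {p : ℝ × ℝ | p.1 = p.2} ≤ 2 * (gaussianReal 0 1) (Set.Iic (−γ/2)). -/
open MeasureTheory ProbabilityTheory

lemma gauss_neg_apply (s : Set ℝ) (hs : MeasurableSet s) :
    (gaussianReal 0 1) s = (gaussianReal 0 1) ((fun x : ℝ => -1 * x) ⁻¹' s) := by
  have h : (gaussianReal 0 1).map (fun x : ℝ => -1 * x) = gaussianReal 0 1 := by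
    have := gaussianReal_map_const_mul (μ := 0) (v := 1) (-1)
    simpa using this
  conv_lhs => rw [← h]
  rw [Measure.map_apply (by fun_prop) hs]

/-- **Maximal coupling of mean-shifted Gaussians (optimality).** For `γ ≥ 0`,
every coupling `W` of `N(0,1)` and `N(γ,1)` has diagonal-event probability at
most `2 Φ(−γ/2)`, i.e. `1` minus the total variation distance. -/
theorem gaussian_shift_coupling_upper (γ : ℝ) (hγ : 0 ≤ γ)
    (W : Measure (ℝ × ℝ)) (hW : IsProbabilityMeasure W)
    (h1 : W.map Prod.fst = gaussianReal 0 1)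
    (h2 : W.map Prod.snd = gaussianReal γ 1) :
    W {p : ℝ × ℝ | p.1 = p.2} ≤
      2 * (gaussianReal 0 1) (Set.Iic (-γ / 2)) := by
  have hsub : {p : ℝ × ℝ | p.1 = p.2} ⊆
      {p : ℝ × ℝ | p.2 ≤ γ / 2} ∪ {p : ℝ × ℝ | γ / 2 < p.1} := by
    intro p hp
    rcases le_or_gt p.1 (γ / 2) with h | h
    · exact Or.inl (show p.2 ≤ γ/2 from (Set.mem_setOf_eq ▸ hp) ▸ h)
    · exact Or.inr h
  have key : W {p : ℝ × ℝ | p.1 = p.2} ≤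
      W {p : ℝ × ℝ | p.2 ≤ γ / 2} + W {p : ℝ × ℝ | γ / 2 < p.1} :=
    le_trans (measure_mono hsub) (measure_union_le _ _)
  -- second marginal term
  have e2 : W {p : ℝ × ℝ | p.2 ≤ γ / 2} = (gaussianReal 0 1) (Set.Iic (-γ / 2)) := by
    have : W {p : ℝ × ℝ | p.2 ≤ γ / 2} = (W.map Prod.snd) (Set.Iic (γ / 2)) := by
      rw [Measure.map_apply measurable_snd measurableSet_Iic]; rfl
    rw [this, h2]
    have hmap : (gaussianReal 0 1).map (fun x : ℝ => x + γ) = gaussianReal γ 1 := by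
      simpa using gaussianReal_map_add_const (μ := 0) (v := 1) γ
    rw [← hmap, Measure.map_apply (by fun_prop) measurableSet_Iic]
    congr 1
    ext x
    simp only [Set.mem_preimage, Set.mem_Iic]
    constructor <;> intro h <;> linarith
  -- first marginal term
  have e1 : W {p : ℝ × ℝ | γ / 2 < p.1} ≤ (gaussianReal 0 1) (Set.Iic (-γ / 2)) := by
    have : W {p : ℝ × ℝ | γ / 2 < p.1} = (W.map Prod.fst) (Set.Ioi (γ / 2)) := by
      rw [Measure.map_apply measurable_fst measurableSet_Ioi]; rfl
    rw [this, h1, gauss_neg_apply _ measurableSet_Ioi]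
    apply measure_mono
    intro x hx
    simp only [Set.mem_preimage, Set.mem_Ioi] at hx
    simp only [Set.mem_Iic]
    linarith
  calc W {p : ℝ × ℝ | p.1 = p.2} ≤ _ := key
    _ ≤ (gaussianReal 0 1) (Set.Iic (-γ / 2)) + (gaussianReal 0 1) (Set.Iic (-γ / 2)) := by
        rw [e2]; exact add_le_add le_rfl e1
    _ = 2 * (gaussianReal 0 1) (Set.Iic (-γ / 2)) := by ring
end

section
/- For every γ ≥ 0 and every measurable set s ⊆ ℝ, (gaussianReal 0 1) s ≤ (gaussianReal γ 1) s + (gaussianReal 0 1) (Set.Ioc (−γ/2) (γ/2)). -/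
open MeasureTheory ProbabilityTheory
open scoped NNReal ENNReal

lemma gaussianPDF_shift_le {γ x : ℝ} (hγ : 0 ≤ γ) (hx : γ / 2 ≤ x) :
    gaussianPDF 0 1 x ≤ gaussianPDF γ 1 x := by
  unfold gaussianPDF gaussianPDFReal
  apply ENNReal.ofReal_le_ofReal
  have h2 : (0:ℝ) < (Real.sqrt (2 * Real.pi * (1:ℝ≥0)))⁻¹ := by
    rw [inv_pos]
    apply Real.sqrt_pos.mpr
    positivity
  apply mul_le_mul_of_nonneg_left _ h2.le
  apply Real.exp_le_exp.mpr
  rw [div_le_div_iff_of_pos_right (by positivity)]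
  nlinarith [hx, hγ]

lemma gaussianReal_mono_on {γ : ℝ} (hγ : 0 ≤ γ) {T : Set ℝ} (hT : MeasurableSet T)
    (h : ∀ x ∈ T, γ / 2 ≤ x) :
    gaussianReal 0 1 T ≤ gaussianReal γ 1 T := by
  rw [gaussianReal_apply 0 one_ne_zero, gaussianReal_apply γ one_ne_zero]
  exact setLIntegral_mono (measurable_gaussianPDF γ 1)
    (fun x hx => gaussianPDF_shift_le hγ (h x hx))

lemma gaussianReal_mono_on' {γ : ℝ} (hγ : 0 ≤ γ) {T : Set ℝ} (hT : MeasurableSet T)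
    (h : ∀ x ∈ T, x ≤ γ / 2) :
    gaussianReal γ 1 T ≤ gaussianReal 0 1 T := by
  rw [gaussianReal_apply 0 one_ne_zero, gaussianReal_apply γ one_ne_zero]
  refine setLIntegral_mono (measurable_gaussianPDF 0 1) (fun x hx => ?_)
  unfold gaussianPDF gaussianPDFReal
  apply ENNReal.ofReal_le_ofReal
  have h2 : (0:ℝ) < (Real.sqrt (2 * Real.pi * (1:ℝ≥0)))⁻¹ := by
    rw [inv_pos]
    apply Real.sqrt_pos.mpr
    positivity
  apply mul_le_mul_of_nonneg_left _ h2.le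
  apply Real.exp_le_exp.mpr
  rw [div_le_div_iff_of_pos_right (by positivity)]
  have hx' := h x hx
  nlinarith [hx', hγ]

/-- **Gaussian shift total-variation bound.** For `γ ≥ 0` and every
measurable set `s`, `N(0,1)(s) ≤ N(γ,1)(s) + N(0,1)(Ioc(−γ/2, γ/2))`. -/
theorem gaussian_shift_tv_bound (γ : ℝ) (hγ : 0 ≤ γ)
    (s : Set ℝ) (hs : MeasurableSet s) :
    (gaussianReal 0 1) s ≤
      (gaussianReal γ 1) s + (gaussianReal 0 1) (Set.Ioc (-γ / 2) (γ / 2)) := by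
  set μ0 := gaussianReal 0 1 with hμ0
  set μ1 := gaussianReal γ 1 with hμ1
  set c := γ / 2 with hc
  set A := s ∩ Set.Iic c with hA
  set B := s ∩ Set.Ioi c with hB
  have hAm : MeasurableSet A := hs.inter measurableSet_Iic
  have hBm : MeasurableSet B := hs.inter measurableSet_Ioi
  -- split s
  have hsplit0 : μ0 s = μ0 A + μ0 B := by
    rw [← measure_inter_add_diff s measurableSet_Iic]
    congr 1
    rw [Set.diff_eq, Set.compl_Iic]
  have hsplit1 : μ1 A + μ1 B ≤ μ1 s := by
    rw [← measure_inter_add_diff s measurableSet_Iic]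
    apply add_le_add_right
    apply measure_mono
    rw [Set.diff_eq, Set.compl_Iic]
  -- B part
  have hBle : μ0 B ≤ μ1 B :=
    gaussianReal_mono_on hγ hBm (fun x hx => le_of_lt hx.2)
  -- shift identity: μ1 (Iic c) = μ0 (Iic (-c))
  have hshift : μ1 (Set.Iic c) = μ0 (Set.Iic (-c)) := by
    rw [hμ1, hμ0, show (γ : ℝ) = 0 + γ by ring, ← gaussianReal_map_add_const γ,
      Measure.map_apply (measurable_id'.add_const γ) measurableSet_Iic]
    congr 1
    ext x
    simp only [Set.mem_preimage, Set.mem_Iic, hc]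
    constructor <;> intro h <;> linarith
  -- decompose Iic c for μ0
  have hIoc : μ0 (Set.Iic c) = μ0 (Set.Iic (-c)) + μ0 (Set.Ioc (-c) c) := by
    rw [← measure_union (Set.Iic_disjoint_Ioc le_rfl) (measurableSet_Ioc),
      Set.Iic_union_Ioc_eq_Iic (by simp [hc]; linarith)]
  -- decompose Iic c over A
  have hD0 : μ0 A + μ0 (Set.Iic c \ A) = μ0 (Set.Iic c) := by
    have := measure_inter_add_diff (μ := μ0) (Set.Iic c) hAm
    rwa [Set.inter_comm, Set.inter_eq_left.mpr Set.inter_subset_right] at this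
  have hD1 : μ1 A + μ1 (Set.Iic c \ A) = μ1 (Set.Iic c) := by
    have := measure_inter_add_diff (μ := μ1) (Set.Iic c) hAm
    rwa [Set.inter_comm, Set.inter_eq_left.mpr Set.inter_subset_right] at this
  have hdiff : μ1 (Set.Iic c \ A) ≤ μ0 (Set.Iic c \ A) :=
    gaussianReal_mono_on' hγ (measurableSet_Iic.diff hAm) (fun x hx => hx.1)
  -- key inequality for A
  have hAle : μ0 A ≤ μ1 A + μ0 (Set.Ioc (-c) c) := by
    have key : μ0 A + μ1 (Set.Iic c) ≤ (μ1 A + μ0 (Set.Ioc (-c) c)) + μ1 (Set.Iic c) := by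
      calc μ0 A + μ1 (Set.Iic c) = μ0 A + (μ1 A + μ1 (Set.Iic c \ A)) := by rw [hD1]
        _ ≤ μ0 A + (μ1 A + μ0 (Set.Iic c \ A)) := by
            gcongr
        _ = μ1 A + (μ0 A + μ0 (Set.Iic c \ A)) := by ring
        _ = μ1 A + μ0 (Set.Iic c) := by rw [hD0]
        _ = μ1 A + (μ0 (Set.Iic (-c)) + μ0 (Set.Ioc (-c) c)) := by rw [hIoc]
        _ = (μ1 A + μ0 (Set.Ioc (-c) c)) + μ1 (Set.Iic c) := by rw [hshift]; ring
    exact (ENNReal.add_le_add_iff_right (measure_ne_top μ1 _)).mp key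
  have hIocEq : Set.Ioc (-γ / 2) (γ / 2) = Set.Ioc (-c) c := by
    rw [hc]; congr 1; ring
  rw [hIocEq, hsplit0]
  calc μ0 A + μ0 B ≤ (μ1 A + μ0 (Set.Ioc (-c) c)) + μ1 B := add_le_add hAle hBle
    _ = (μ1 A + μ1 B) + μ0 (Set.Ioc (-c) c) := by ring
    _ ≤ μ1 s + μ0 (Set.Ioc (-c) c) := add_le_add_left hsplit1 _
end
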